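/- Let $X$ be a closed subset with nonempty interior of a Banach space $\tilde X$, $Y$ an open subset of a Banach space $\tilde Y$, and $T : X \times Y \to X$ with $\|T(x_1,y)-T(x_2,y)\| \leq k\|x_1-x_2\|$ for a fixed $k<1$ and all $y$. Denote by $x(y)$ the fixed point of $T(\cdot,y)$, and assume: $x(y)$ lies in the interior of $X$ for every $y$; $x(y)$ is Lipschitz continuous in $y$; $T$ is Fréchet differentiable in $y$ at a point $(\bar x, \bar y)$ with $\bar x = x(\bar y)$; and the partial Fréchet derivative $T_x(x,y)$ exists and is continuous in a neighbourhood of $(\bar x, \bar y)$. Then $x(\cdot)$ is Fréchet differentiable at $\bar y$ with derivative $[I - T_x(x(\bar y), \bar y)]^{-1} \circ T_y(x(\bar y), \bar y)$. -/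

import Mathlib

open Filter Asymptotics

set_option maxHeartbeats 1000000

/-- Lemma 3.1: Fréchet differentiability of the fixed point of a
family of contractions with respect to the parameter; the derivative `D`
satisfies `(I - T_x) ∘ D = T_y`, i.e. `D = [I - T_x]⁻¹ ∘ T_y`. -/
theorem fixed_point_frechet_differentiable
    {E F : Type*} [NormedAddCommGroup E] [NormedSpace ℝ E] [CompleteSpace E]
    [NormedAddCommGroup F] [NormedSpace ℝ F]
    (X : Set E) (Y : Set F) (hX : IsClosed X) (hXint : (interior X).Nonempty)
    (hY : IsOpen Y)
    (T : E → F → E) (k : ℝ) (hk : k < 1)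
    (hmaps : ∀ x ∈ X, ∀ y ∈ Y, T x y ∈ X)
    (hcontr : ∀ y ∈ Y, ∀ x₁ ∈ X, ∀ x₂ ∈ X, ‖T x₁ y - T x₂ y‖ ≤ k * ‖x₁ - x₂‖)
    (x : F → E)
    (hxint : ∀ y ∈ Y, x y ∈ interior X)
    (hfix : ∀ y ∈ Y, T (x y) y = x y)
    (K : NNReal) (hLip : LipschitzOnWith K x Y)
    (ybar : F) (hybar : ybar ∈ Y)
    (Tx : E → F → (E →L[ℝ] E)) (V : Set (E × F)) (hV : IsOpen V)
    (hVmem : (x ybar, ybar) ∈ V)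
    (hTx : ∀ p ∈ V, HasFDerivAt (fun u => T u p.2) (Tx p.1 p.2) p.1)
    (hTxcont : ContinuousOn (fun p : E × F => Tx p.1 p.2) V)
    (Ty : F →L[ℝ] E)
    (hTy : HasFDerivAt (fun v => T (x ybar) v) Ty ybar) :
    ∃ D : F →L[ℝ] E,
      (ContinuousLinearMap.id ℝ E - Tx (x ybar) ybar).comp D = Ty ∧
      HasFDerivAt x D ybar := by
  set xb := x ybar with hxb
  set A := Tx xb ybar with hA
  -- A is a derivative of the contraction, hence ‖A‖ < 1
  have hAderiv : HasFDerivAt (fun u => T u ybar) A (xb) := hTx (xb, ybar) hVmem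
  have hXnhds : X ∈ nhds xb :=
    mem_of_superset (isOpen_interior.mem_nhds (hxint ybar hybar)) interior_subset
  have hlipT : LipschitzOnWith k.toNNReal (fun u => T u ybar) X := by
    rw [lipschitzOnWith_iff_norm_sub_le]
    intro a ha b hb
    calc ‖T a ybar - T b ybar‖ ≤ k * ‖a - b‖ := hcontr ybar hybar a ha b hb
      _ ≤ (k.toNNReal : ℝ) * ‖a - b‖ :=
          mul_le_mul_of_nonneg_right (Real.le_coe_toNNReal k) (norm_nonneg _)
  have hktn : (k.toNNReal : ℝ) < 1 := by
    rw [Real.coe_toNNReal']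
    exact max_lt hk one_pos
  have hAnorm : ‖A‖ < 1 := lt_of_le_of_lt (hAderiv.le_of_lipschitzOn hXnhds hlipT) hktn
  -- invert 1 - A
  let u : (E →L[ℝ] E)ˣ := Units.oneSub A hAnorm
  have hu : (u : E →L[ℝ] E) = 1 - A := rfl
  set B : E →L[ℝ] E := ↑u⁻¹ with hB
  have hBu : B * ((1 : E →L[ℝ] E) - A) = 1 := by rw [hB, ← hu]; exact u.inv_mul
  have huB : ((1 : E →L[ℝ] E) - A) * B = 1 := by rw [hB, ← hu]; exact u.mul_inv
  have hBinv : ∀ e : E, B (((1 : E →L[ℝ] E) - A) e) = e := by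
    intro e
    have := congrArg (fun f : E →L[ℝ] E => f e) hBu
    simpa [ContinuousLinearMap.mul_apply] using this
  refine ⟨B.comp Ty, ?_, ?_⟩
  · ext v
    have h2 := congrArg (fun f : E →L[ℝ] E => f (Ty v)) huB
    simpa [ContinuousLinearMap.mul_apply, ContinuousLinearMap.sub_apply] using h2
  -- differentiability
  rw [hasFDerivAt_iff_isLittleO, isLittleO_iff]
  intro c hc
  set M := ‖B‖ + 1 with hM
  have hM0 : 0 < M := by positivity
  set ε₁ : ℝ := c / (2 * M * ((K : ℝ) + 1)) with hε₁
  set ε₂ : ℝ := c / (2 * M) with hε₂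
  have hε₁0 : 0 < ε₁ := by positivity
  have hε₂0 : 0 < ε₂ := by positivity
  -- neighborhood where ‖Tx - A‖ ≤ ε₁
  have hcontA : ContinuousWithinAt (fun p : E × F => Tx p.1 p.2) V (xb, ybar) :=
    hTxcont _ hVmem
  have hev : ∀ᶠ p in nhds (xb, ybar), p ∈ V → ‖Tx p.1 p.2 - A‖ ≤ ε₁ := by
    have h1 : ∀ᶠ p in nhdsWithin (xb, ybar) V, ‖Tx p.1 p.2 - A‖ ≤ ε₁ := by
      filter_upwards [Metric.tendsto_nhds.mp hcontA ε₁ hε₁0] with p hp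
      rw [dist_eq_norm] at hp
      exact hp.le
    rw [eventually_nhdsWithin_iff] at h1
    exact h1
  obtain ⟨W, hWsub, hWopen, hWmem⟩ := eventually_nhds_iff.mp hev
  obtain ⟨r, hr0, hrball⟩ := Metric.mem_nhds_iff.mp
    (Filter.inter_mem (hWopen.mem_nhds hWmem) (hV.mem_nhds hVmem) :
      W ∩ V ∈ nhds (xb, ybar))
  -- radius for y
  set δ : ℝ := r / ((K : ℝ) + 1) with hδ
  have hδ0 : 0 < δ := by positivity
  have hδr : δ ≤ r := by
    rw [hδ, div_le_iff₀ (by positivity)]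
    nlinarith [K.coe_nonneg, hr0]
  have hYn : Y ∈ nhds ybar := hY.mem_nhds hybar
  have hball : Metric.ball ybar δ ∈ nhds ybar := Metric.ball_mem_nhds _ hδ0
  -- the little-o from hTy
  have hTyo : ∀ᶠ y in nhds ybar,
      ‖T xb y - T xb ybar - Ty (y - ybar)‖ ≤ ε₂ * ‖y - ybar‖ := by
    exact isLittleO_iff.mp hTy.isLittleO hε₂0
  filter_upwards [hYn, hball, hTyo] with y hyY hyb hTy2
  -- basic estimates
  have hxlip : ‖x y - xb‖ ≤ (K : ℝ) * ‖y - ybar‖ := by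
    have := hLip.dist_le_mul y hyY ybar hybar
    rwa [dist_eq_norm, dist_eq_norm] at this
  have hyb' : ‖y - ybar‖ < δ := by rwa [Metric.mem_ball, dist_eq_norm] at hyb
  have hKr : (K : ℝ) * ‖y - ybar‖ < r := by
    calc (K : ℝ) * ‖y - ybar‖ ≤ ((K : ℝ) + 1) * ‖y - ybar‖ := by
          have := norm_nonneg (y - ybar); nlinarith
      _ < ((K : ℝ) + 1) * δ := mul_lt_mul_of_pos_left hyb' (by positivity)
      _ = r := by rw [hδ]; field_simp
  -- the ball in E
  set s : Set E := Metric.ball xb r with hs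
  have hxb_mem : xb ∈ s := Metric.mem_ball_self hr0
  have hxy_mem : x y ∈ s := by
    rw [hs, Metric.mem_ball, dist_eq_norm]
    exact lt_of_le_of_lt hxlip hKr
  have hpair : ∀ v ∈ s, (v, y) ∈ W ∩ V := by
    intro v hv
    apply hrball
    rw [Metric.mem_ball, Prod.dist_eq]
    refine max_lt ?_ ?_
    · exact hv
    · rw [dist_eq_norm]; exact lt_of_lt_of_le hyb' hδr
  -- mean value estimate
  have hmv : ‖T (x y) y - T xb y - A (x y - xb)‖ ≤ ε₁ * ‖x y - xb‖ := by
    have hconv : Convex ℝ s := convex_ball _ _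
    refine hconv.norm_image_sub_le_of_norm_hasFDerivWithin_le'
      (f := fun v => T v y) (f' := fun v => Tx v y) (φ := A)
      (fun v hv => ((hTx (v, y) (hpair v hv).2)).hasFDerivWithinAt)
      (fun v hv => hWsub (v, y) (hpair v hv).1 (hpair v hv).2)
      hxb_mem hxy_mem
  -- combine
  have hfy : T (x y) y = x y := hfix y hyY
  have hfb : T xb ybar = xb := hfix ybar hybar
  have key : x y - xb - (B.comp Ty) (y - ybar)
      = B ((T (x y) y - T xb y - A (x y - xb)) + (T xb y - T xb ybar - Ty (y - ybar))) := by
    have h1 : (T (x y) y - T xb y - A (x y - xb)) + (T xb y - T xb ybar - Ty (y - ybar))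
        = ((1 : E →L[ℝ] E) - A) (x y - xb) - Ty (y - ybar) := by
      rw [hfy, hfb]
      simp only [ContinuousLinearMap.sub_apply, ContinuousLinearMap.one_apply]
      abel
    have h2 : B (((1 : E →L[ℝ] E) - A) (x y - xb) - Ty (y - ybar))
        = x y - xb - B (Ty (y - ybar)) := by
      rw [map_sub, hBinv]
    rw [h1, h2]
    rfl
  have hBnorm : ∀ e : E, ‖B e‖ ≤ M * ‖e‖ := by
    intro e
    calc ‖B e‖ ≤ ‖B‖ * ‖e‖ := B.le_opNorm e
      _ ≤ M * ‖e‖ := by have := norm_nonneg e; nlinarith [norm_nonneg B]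
  calc ‖x y - xb - (B.comp Ty) (y - ybar)‖
      = ‖B ((T (x y) y - T xb y - A (x y - xb)) + (T xb y - T xb ybar - Ty (y - ybar)))‖ := by
        rw [key]
    _ ≤ M * ‖(T (x y) y - T xb y - A (x y - xb)) + (T xb y - T xb ybar - Ty (y - ybar))‖ :=
        hBnorm _
    _ ≤ M * (ε₁ * ‖x y - xb‖ + ε₂ * ‖y - ybar‖) := by
        gcongr
        exact (norm_add_le _ _).trans (add_le_add hmv hTy2)
    _ ≤ M * (ε₁ * ((K : ℝ) * ‖y - ybar‖) + ε₂ * ‖y - ybar‖) := by gcongr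
    _ ≤ c * ‖y - ybar‖ := by
        have hn : (0:ℝ) ≤ ‖y - ybar‖ := norm_nonneg _
        have hK0 : (0:ℝ) ≤ K := K.coe_nonneg
        have hM' : M ≠ 0 := hM0.ne'
        have hK' : (K:ℝ) + 1 ≠ 0 := by positivity
        have hMε₁ : M * ε₁ * ((K:ℝ) + 1) = c / 2 := by
          rw [hε₁]; field_simp
        have hMε₂ : M * ε₂ = c / 2 := by
          rw [hε₂]; field_simp
        have e1 : M * ε₁ * ((K:ℝ) + 1) * ‖y - ybar‖ = c / 2 * ‖y - ybar‖ := by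
          rw [hMε₁]
        have e2 : M * ε₂ * ‖y - ybar‖ = c / 2 * ‖y - ybar‖ := by
          rw [hMε₂]
        calc M * (ε₁ * ((K:ℝ) * ‖y - ybar‖) + ε₂ * ‖y - ybar‖)
            = M * ε₁ * ((K:ℝ) * ‖y - ybar‖) + M * ε₂ * ‖y - ybar‖ := by ring
          _ ≤ M * ε₁ * (((K:ℝ) + 1) * ‖y - ybar‖) + M * ε₂ * ‖y - ybar‖ := by
              have h3 : (K:ℝ) * ‖y - ybar‖ ≤ ((K:ℝ) + 1) * ‖y - ybar‖ :=
                mul_le_mul_of_nonneg_right (by linarith) hn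
              have h4 := mul_le_mul_of_nonneg_left h3 (mul_nonneg hM0.le hε₁0.le)
              linarith
          _ = c / 2 * ‖y - ybar‖ + c / 2 * ‖y - ybar‖ := by
              rw [show M * ε₁ * (((K:ℝ) + 1) * ‖y - ybar‖)
                  = M * ε₁ * ((K:ℝ) + 1) * ‖y - ybar‖ from by ring, e1, e2]
          _ = c * ‖y - ybar‖ := by ring
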